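/- Let P be an associated prime of B^n (B = BHH(m,r,1)) and suppose there exist i ∈ [m] and j ∈ [r] with x_{i,j} ∉ P and x_{i,j+1} ∉ P (indices mod r). Then c ∉ P. -/

import Mathlib

open MvPolynomial

abbrev Var (m r : ℕ) := Fin r ⊕ Unit ⊕ (Fin m × Fin r)

noncomputable def va {k : Type*} [Field k] (m r : ℕ) (j : Fin r) :
    MvPolynomial (Var m r) k := X (Sum.inl j)

noncomputable def vc {k : Type*} [Field k] (m r : ℕ) :
    MvPolynomial (Var m r) k := X (Sum.inr (Sum.inl ()))

noncomputable def vx {k : Type*} [Field k] (m r : ℕ) (i : Fin m) (j : Fin r) :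
    MvPolynomial (Var m r) k := X (Sum.inr (Sum.inr (i, j)))

noncomputable def hgen {k : Type*} [Field k] (m r : ℕ) [NeZero r] (i : Fin m) (j : Fin r) :
    MvPolynomial (Var m r) k :=
  va m r j ^ 4 * vx m r i j * vx m r i (j + 1) ^ 2

noncomputable def BHH {k : Type*} [Field k] (m r : ℕ) [NeZero r] :
    Ideal (MvPolynomial (Var m r) k) :=
  Ideal.span
    ((Set.range fun j : Fin r => va m r j ^ 6) ∪
      (Set.range fun j : Fin r => va m r j ^ 5 * va m r (j + 1)) ∪
      {vc m r * ∏ j : Fin r, va m r j ^ 4} ∪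
      (Set.range fun p : Fin m × Fin r => hgen m r p.1 p.2))

namespace Stmt18Aux

/-- The `c`-free variables. -/
abbrev Tau (m r : ℕ) := Fin r ⊕ (Fin m × Fin r)

def embVar (m r : ℕ) : Tau m r → Var m r := Sum.map id Sum.inr

def varEquiv (m r : ℕ) : Var m r ≃ Option (Tau m r) where
  toFun v := match v with
    | .inl j => some (.inl j)
    | .inr (.inl _) => none
    | .inr (.inr p) => some (.inr p)
  invFun o := match o with
    | none => .inr (.inl ())
    | some (.inl j) => .inl j
    | some (.inr p) => .inr (.inr p)
  left_inv := by rintro (j | ⟨⟩ | p) <;> rfl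
  right_inv := by rintro (_ | (j | p)) <;> rfl

variable {k : Type*} [Field k]

noncomputable def iota (m r : ℕ) :
    MvPolynomial (Tau m r) k →+* MvPolynomial (Var m r) k :=
  (rename (embVar m r)).toRingHom

noncomputable def phi (m r : ℕ) :
    MvPolynomial (Var m r) k ≃+* Polynomial (MvPolynomial (Tau m r) k) :=
  ((renameEquiv k (varEquiv m r)).trans (optionEquivLeft k (Tau m r))).toRingEquiv

lemma phi_comp_iota (m r : ℕ) :
    (phi (k := k) m r).toRingHom.comp (iota (k := k) m r) =
      (Polynomial.C : MvPolynomial (Tau m r) k →+* _) := by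
  apply MvPolynomial.ringHom_ext
  · intro a
    simp [phi, iota, renameEquiv, rename_C, optionEquivLeft_C]
  · intro t
    have h1 : (iota (k := k) m r) (X t) = X (embVar m r t) := rename_X _ _
    have h2 : varEquiv m r (embVar m r t) = some t := by
      cases t <;> rfl
    simp only [RingHom.comp_apply, h1]
    show (phi (k := k) m r) (X (embVar m r t)) = Polynomial.C (X t)
    simp only [phi, AlgEquiv.toRingEquiv_eq_coe, AlgEquiv.coe_ringEquiv,
      AlgEquiv.trans_apply, renameEquiv_apply, rename_X, h2, optionEquivLeft_X_some]

lemma phi_vc (m r : ℕ) : (phi (k := k) m r) (vc m r) = Polynomial.X := by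
  have : varEquiv m r (Sum.inr (Sum.inl ())) = none := rfl
  simp only [vc, phi, AlgEquiv.toRingEquiv_eq_coe, AlgEquiv.coe_ringEquiv,
    AlgEquiv.trans_apply, renameEquiv_apply, rename_X, this, optionEquivLeft_X_none]

lemma reg (m r : ℕ) (K : Ideal (MvPolynomial (Tau m r) k))
    (g : MvPolynomial (Var m r) k)
    (h : vc m r * g ∈ K.map (iota (k := k) m r)) :
    g ∈ K.map (iota (k := k) m r) := by
  set φ := phi (k := k) m r
  have hmap : (K.map (iota (k := k) m r)).map φ.toRingHom = K.map Polynomial.C := by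
    rw [Ideal.map_map, phi_comp_iota]
  have h1 : φ (vc m r * g) ∈ K.map Polynomial.C := by
    rw [← hmap]; exact Ideal.mem_map_of_mem _ h
  rw [map_mul, phi_vc] at h1
  have h2 : φ g ∈ K.map Polynomial.C := by
    rw [Ideal.mem_map_C_iff] at h1 ⊢
    intro d
    simpa [Polynomial.coeff_X_mul] using h1 (d + 1)
  rw [← hmap] at h2
  obtain ⟨p, hp, hpg⟩ :=
    (Ideal.mem_map_iff_of_surjective φ.toRingHom φ.surjective).1 h2
  rwa [← φ.injective hpg]

lemma pow_le {R : Type*} [CommRing R] (J : Ideal R) (a : R) (n : ℕ) :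
    (Ideal.span {a} + J) ^ (n + 1) ≤
      Ideal.span {a} * (Ideal.span {a} + J) ^ n + J ^ (n + 1) := by
  induction n with
  | zero => simp [Ideal.mul_top]
  | succ n ih =>
    set B := Ideal.span {a} + J with hB
    have hJB : J ≤ B := le_sup_right
    calc B ^ (n + 2) = B ^ (n + 1) * B := pow_succ B (n + 1)
      _ ≤ (Ideal.span {a} * B ^ n + J ^ (n + 1)) * B := Ideal.mul_mono_left ih
      _ = Ideal.span {a} * B ^ n * B + J ^ (n + 1) * B := add_mul _ _ _
      _ ≤ Ideal.span {a} * B ^ (n + 1) + J ^ (n + 2) := by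
          apply sup_le
          · rw [mul_assoc, ← pow_succ]
            exact le_sup_left
          · rw [hB, mul_add]
            apply sup_le
            · rw [mul_comm]
              exact le_trans (Ideal.mul_mono_right (Ideal.pow_right_mono hJB _)) le_sup_left
            · rw [← pow_succ]
              exact le_sup_right

lemma key {R : Type*} [CommRing R] (J : Ideal R) (c v u : R) (n : ℕ)
    (huv : u * v ∈ J)
    (hreg : ∀ g : R, c * g ∈ J ^ (n + 1) → g ∈ J ^ (n + 1))
    (f : R) (hf : c * f ∈ (Ideal.span {c * v} + J) ^ (n + 1)) :
    u * f ∈ (Ideal.span {c * v} + J) ^ (n + 1) := by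
  set B := Ideal.span {c * v} + J with hB
  have h1 := pow_le J (c * v) n hf
  rw [Submodule.add_eq_sup, Submodule.mem_sup] at h1
  obtain ⟨p, hp, q, hq, hpq⟩ := h1
  rw [Ideal.mem_span_singleton_mul] at hp
  obtain ⟨h, hh, rfl⟩ := hp
  have hfvh : f - v * h ∈ J ^ (n + 1) := by
    apply hreg
    have hcq : c * (f - v * h) = q := by linear_combination -hpq
    rw [hcq]; exact hq
  have hsplit : u * f = u * v * h + u * (f - v * h) := by ring
  rw [hsplit]
  refine Ideal.add_mem _ ?_ ?_
  · have huvB : u * v ∈ B := le_sup_right (a := Ideal.span {c * v}) huv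
    have := Ideal.mul_mem_mul huvB hh
    rwa [← pow_succ'] at this
  · exact Ideal.mul_mem_left _ u (Ideal.pow_right_mono (le_sup_right (a := Ideal.span {c * v})) _ hfvh)

variable (m r : ℕ) [NeZero r]

noncomputable def J0 : Ideal (MvPolynomial (Tau m r) k) :=
  Ideal.span
    ((Set.range fun j : Fin r => (X (Sum.inl j) : MvPolynomial (Tau m r) k) ^ 6) ∪
      (Set.range fun j : Fin r =>
        (X (Sum.inl j) : MvPolynomial (Tau m r) k) ^ 5 * X (Sum.inl (j + 1))) ∪
      (Set.range fun p : Fin m × Fin r =>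
        (X (Sum.inl p.2) : MvPolynomial (Tau m r) k) ^ 4 * X (Sum.inr p) *
          X (Sum.inr (p.1, p.2 + 1)) ^ 2))

lemma map_J0 :
    (J0 (k := k) m r).map (iota (k := k) m r) =
      Ideal.span
        ((Set.range fun j : Fin r => va (k := k) m r j ^ 6) ∪
          (Set.range fun j : Fin r => va m r j ^ 5 * va m r (j + 1)) ∪
          (Set.range fun p : Fin m × Fin r => hgen m r p.1 p.2)) := by
  rw [J0, Ideal.map_span]
  congr 1
  rw [Set.image_union, Set.image_union, ← Set.range_comp, ← Set.range_comp, ← Set.range_comp]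
  congr 1
  · congr 1
    · ext q
      simp only [Set.mem_range, Function.comp_apply]
      refine exists_congr fun j => ?_
      rw [iota, va]
      simp [embVar]
    · ext q
      simp only [Set.mem_range, Function.comp_apply]
      refine exists_congr fun j => ?_
      rw [iota, va, va]
      simp [embVar]
  · ext q
    simp only [Set.mem_range, Function.comp_apply]
    refine exists_congr fun p => ?_
    rw [iota, hgen, va, vx, vx]
    simp [embVar]

lemma BHH_eq :
    BHH (k := k) m r =
      Ideal.span {vc (k := k) m r * ∏ j : Fin r, va m r j ^ 4} +
        (J0 (k := k) m r).map (iota (k := k) m r) := by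
  rw [BHH, map_J0, Submodule.add_eq_sup]
  simp only [Ideal.span_union]
  ac_rfl

end Stmt18Aux

open Stmt18Aux in
theorem stmt18 {k : Type*} [Field k] (m r n : ℕ) (hm : 1 ≤ m) (hn : 1 ≤ n)
    (P : Ideal (MvPolynomial (Var m (r + 2)) k))
    (hP : P ∈ associatedPrimes (MvPolynomial (Var m (r + 2)) k)
      (MvPolynomial (Var m (r + 2)) k ⧸ (BHH (k := k) m (r + 2)) ^ n))
    (i : Fin m) (j : Fin (r + 2))
    (hx1 : vx (k := k) m (r + 2) i j ∉ P)
    (hx2 : vx (k := k) m (r + 2) i (j + 1) ∉ P) :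
    vc (k := k) m (r + 2) ∉ P := by
  intro hc
  obtain ⟨hprime, x, hPx⟩ := hP
  obtain ⟨f, rfl⟩ := Ideal.Quotient.mk_surjective x
  have hmem : ∀ g : MvPolynomial (Var m (r + 2)) k,
      g ∈ P ↔ ∃ t : ℕ, g ^ t * f ∈ (BHH (k := k) m (r + 2)) ^ n := by
    intro g
    rw [hPx, Ideal.mem_radical_iff]
    refine exists_congr fun t => ?_
    rw [Submodule.mem_colon_singleton, Submodule.mem_bot]
    have : g ^ t • (Ideal.Quotient.mk ((BHH (k := k) m (r + 2)) ^ n) f) =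
        Ideal.Quotient.mk _ (g ^ t * f) := rfl
    rw [this, Ideal.Quotient.eq_zero_iff_mem]
  obtain ⟨t, hcf⟩ := (hmem _).1 hc
  obtain ⟨n, rfl⟩ : ∃ n', n = n' + 1 := ⟨n - 1, (Nat.succ_pred_eq_of_pos hn).symm⟩
  set u := vx (k := k) m (r + 2) i j * vx (k := k) m (r + 2) i (j + 1) ^ 2 with hu
  have huv : u * (∏ j' : Fin (r + 2), va (k := k) m (r + 2) j' ^ 4) ∈
      (J0 (k := k) m (r + 2)).map (iota (k := k) m (r + 2)) := by
    have hgenmem : hgen (k := k) m (r + 2) i j ∈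
        (J0 (k := k) m (r + 2)).map (iota (k := k) m (r + 2)) := by
      rw [map_J0]
      exact Ideal.subset_span (Or.inr ⟨(i, j), rfl⟩)
    have hprod : (∏ j' : Fin (r + 2), va (k := k) m (r + 2) j' ^ 4) =
        va m (r + 2) j ^ 4 * ∏ j' ∈ Finset.univ.erase j, va m (r + 2) j' ^ 4 :=
      (Finset.mul_prod_erase _ _ (Finset.mem_univ j)).symm
    have : u * (∏ j' : Fin (r + 2), va (k := k) m (r + 2) j' ^ 4) =
        (∏ j' ∈ Finset.univ.erase j, va m (r + 2) j' ^ 4) * hgen m (r + 2) i j := by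
      rw [hprod, hgen, hu]; ring
    rw [this]
    exact Ideal.mul_mem_left _ _ hgenmem
  have hreg : ∀ g, vc (k := k) m (r + 2) * g ∈
      ((J0 (k := k) m (r + 2)).map (iota (k := k) m (r + 2))) ^ (n + 1) →
      g ∈ ((J0 (k := k) m (r + 2)).map (iota (k := k) m (r + 2))) ^ (n + 1) := by
    intro g hg
    rw [← Ideal.map_pow] at hg ⊢
    exact reg _ _ _ _ hg
  have huf : ∀ (t : ℕ) (f' : MvPolynomial (Var m (r + 2)) k),
      vc (k := k) m (r + 2) ^ t * f' ∈ (BHH (k := k) m (r + 2)) ^ (n + 1) →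
      u ^ t * f' ∈ (BHH (k := k) m (r + 2)) ^ (n + 1) := by
    intro t
    induction t with
    | zero => intro f' h; simpa using h
    | succ t ih =>
      intro f' h
      have h1 := ih (vc (k := k) m (r + 2) * f') (by rw [← mul_assoc, ← pow_succ]; exact h)
      have h2 : vc (k := k) m (r + 2) * (u ^ t * f') ∈ (BHH (k := k) m (r + 2)) ^ (n + 1) := by
        rw [mul_left_comm]; exact h1
      rw [BHH_eq] at h2 ⊢
      have := key _ _ _ _ _ huv hreg _ h2
      rw [pow_succ' u t, mul_assoc]; exact this
  have huP : u ∈ P := (hmem u).2 ⟨t, huf t f hcf⟩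
  rcases hprime.mem_or_mem huP with h1 | h2
  · exact hx1 h1
  · exact hx2 (hprime.mem_of_pow_mem _ h2)
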